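/- Let G be a finite simple graph and Q a nonempty clique of G. If d₁ and d₂ are the degrees in G of the vertices of Q with smallest and largest degree respectively, then η(G) ≥ ⌈(d₁ + 1) / (d₂ − |Q| + 2)⌉. -/

import Mathlib

open Classical in
/-- Sum of the labels `f` over the open neighborhood of `v` in `G`. -/
noncomputable def nbrSum {V : Type*} [Fintype V] (G : SimpleGraph V) (f : V → ℕ) (v : V) : ℕ :=
  ∑ w ∈ Finset.univ.filter (fun w => G.Adj v w), f w

open Classical in
/-- The degree of `v` in `G`. -/
noncomputable def deg {V : Type*} [Fintype V] (G : SimpleGraph V) (v : V) : ℕ :=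
  (Finset.univ.filter (fun w => G.Adj v w)).card

/-- `f : V → {1,…,k}` is an additive `k`-coloring of `G`: labels lie in `{1,…,k}` and
adjacent vertices get distinct open-neighborhood sums. -/
def IsAdditiveColoring {V : Type*} [Fintype V] (G : SimpleGraph V) (k : ℕ) (f : V → ℕ) : Prop :=
  (∀ v, 1 ≤ f v ∧ f v ≤ k) ∧ ∀ u v, G.Adj u v → nbrSum G f u ≠ nbrSum G f v

/-- The additive chromatic number `η(G)`: the least `k` admitting an additive `k`-coloring. -/
noncomputable def eta {V : Type*} [Fintype V] (G : SimpleGraph V) : ℕ :=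
  sInf {k | ∃ f : V → ℕ, IsAdditiveColoring G k f}

open Classical in
lemma exists_additive_coloring {V : Type*} [Fintype V] (G : SimpleGraph V) :
    ∃ k, ∃ f : V → ℕ, IsAdditiveColoring G k f := by
  classical
  let e := Fintype.equivFin V
  refine ⟨2 ^ Fintype.card V, fun w => 2 ^ (e w : ℕ), fun w => ⟨Nat.one_le_two_pow,
    Nat.pow_le_pow_right (by norm_num) (e w).isLt.le⟩, ?_⟩
  intro a b hab h
  have hinj : Function.Injective (fun w : V => (e w : ℕ)) :=
    Fin.val_injective.comp e.injective
  have ha : nbrSum G (fun w => 2 ^ (e w : ℕ)) a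
      = ∑ i ∈ (Finset.univ.filter (fun w => G.Adj a w)).image (fun w => (e w : ℕ)), 2 ^ i := by
    rw [Finset.sum_image (fun x _ y _ hxy => hinj hxy)]; rfl
  have hb : nbrSum G (fun w => 2 ^ (e w : ℕ)) b
      = ∑ i ∈ (Finset.univ.filter (fun w => G.Adj b w)).image (fun w => (e w : ℕ)), 2 ^ i := by
    rw [Finset.sum_image (fun x _ y _ hxy => hinj hxy)]; rfl
  rw [ha, hb] at h
  have himg := Finset.geomSum_injective (le_refl 2) h
  have hNeq : (Finset.univ.filter (fun w => G.Adj a w))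
      = (Finset.univ.filter (fun w => G.Adj b w)) :=
    Finset.image_injective hinj himg
  have hbmem : b ∈ Finset.univ.filter (fun w => G.Adj a w) := by
    simp [hab]
  rw [hNeq] at hbmem
  simp at hbmem

open Classical in
lemma additive_key {V : Type*} [Fintype V] (G : SimpleGraph V)
    (Q : Finset V) (hQ : Q.Nonempty)
    (hclique : ∀ u ∈ Q, ∀ v ∈ Q, u ≠ v → G.Adj u v)
    (u v : V) (hu : u ∈ Q) (hv : v ∈ Q)
    (hmin : ∀ w ∈ Q, deg G u ≤ deg G w) (hmax : ∀ w ∈ Q, deg G w ≤ deg G v)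
    (k : ℕ) (f : V → ℕ) (hf : IsAdditiveColoring G k f) :
    (deg G u : ℤ) + 1 ≤ (k : ℤ) * ((deg G v : ℤ) - Q.card + 2) := by
  classical
  set N : V → Finset V := fun w => Finset.univ.filter (fun x => G.Adj w x) with hN
  have hdeg : ∀ w, deg G w = (N w).card := fun w => rfl
  have hsum : ∀ w, nbrSum G f w = ∑ x ∈ N w, f x := fun w => rfl
  set q : ℕ := Q.card with hq
  have hq1 : 1 ≤ q := Finset.card_pos.mpr hQ
  set S : ℕ := ∑ x ∈ Q, f x with hS
  -- per-vertex facts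
  have herase : ∀ w ∈ Q, Q.erase w ⊆ N w := by
    intro w hw x hx
    rw [Finset.mem_erase] at hx
    simp only [hN, Finset.mem_filter, Finset.mem_univ, true_and]
    exact (hclique x hx.2 w hw hx.1).symm
  have hselfnot : ∀ w, w ∉ N w := by
    intro w hw
    simp only [hN, Finset.mem_filter] at hw
    exact G.loopless.irrefl w hw.2
  have hdiff : ∀ w ∈ Q, N w \ Q = N w \ Q.erase w := by
    intro w hw
    ext x
    simp only [Finset.mem_sdiff, Finset.mem_erase]
    constructor
    · rintro ⟨hx, hx2⟩; exact ⟨hx, fun h => hx2 h.2⟩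
    · rintro ⟨hx, hx2⟩
      refine ⟨hx, fun hxQ => hx2 ⟨?_, hxQ⟩⟩
      intro h; subst h; exact hselfnot _ hx
  have hm : ∀ w ∈ Q, ((N w \ Q).card : ℤ) = (deg G w : ℤ) - q + 1 := by
    intro w hw
    rw [hdiff w hw, Finset.card_sdiff_of_subset (herase w hw), Finset.card_erase_of_mem hw]
    have h1 : q - 1 ≤ (N w).card := by
      have := Finset.card_le_card (herase w hw)
      rwa [Finset.card_erase_of_mem hw] at this
    rw [hdeg w]
    omega
  -- decomposition and bounds for nbrSum
  have hdecomp : ∀ w ∈ Q, (nbrSum G f w : ℤ) = (S : ℤ) - f w + ((∑ x ∈ N w \ Q, f x : ℕ) : ℤ) := by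
    intro w hw
    have h1 : ∑ x ∈ N w ∩ Q, f x + ∑ x ∈ N w \ Q, f x = ∑ x ∈ N w, f x :=
      Finset.sum_inter_add_sum_sdiff _ _ _
    have h2 : N w ∩ Q = Q.erase w := by
      ext x
      simp only [Finset.mem_inter, Finset.mem_erase, hN, Finset.mem_filter, Finset.mem_univ,
        true_and]
      constructor
      · rintro ⟨hadj, hxQ⟩; exact ⟨fun h => G.loopless.irrefl w (h ▸ hadj), hxQ⟩
      · rintro ⟨hne, hxQ⟩; exact ⟨(hclique x hxQ w hw hne).symm, hxQ⟩
    have h3 : ∑ x ∈ Q.erase w, f x + f w = S := Finset.sum_erase_add Q f hw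
    have h4 : nbrSum G f w + f w = S + ∑ x ∈ N w \ Q, f x := by
      rw [hsum w, ← h1, h2]
      omega
    omega
  have hbound : ∀ w ∈ Q,
      (S : ℤ) - k + (deg G u : ℤ) - q + 1 ≤ (nbrSum G f w : ℤ) ∧
      (nbrSum G f w : ℤ) ≤ (S : ℤ) - 1 + k * ((deg G v : ℤ) - q + 1) := by
    intro w hw
    have hfw1 : 1 ≤ f w := (hf.1 w).1
    have hfwk : f w ≤ k := (hf.1 w).2
    have hmlo : (N w \ Q).card ≤ ∑ x ∈ N w \ Q, f x := by
      calc (N w \ Q).card = ∑ _x ∈ N w \ Q, 1 := by simp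
        _ ≤ ∑ x ∈ N w \ Q, f x := Finset.sum_le_sum (fun x _ => (hf.1 x).1)
    have hmhi : ∑ x ∈ N w \ Q, f x ≤ k * (N w \ Q).card := by
      calc ∑ x ∈ N w \ Q, f x ≤ ∑ _x ∈ N w \ Q, k := Finset.sum_le_sum (fun x _ => (hf.1 x).2)
        _ = k * (N w \ Q).card := by rw [Finset.sum_const, smul_eq_mul, Nat.mul_comm]
    have hmw := hm w hw
    have hdw1 : (deg G u : ℤ) ≤ deg G w := by exact_mod_cast hmin w hw
    have hdw2 : (deg G w : ℤ) ≤ deg G v := by exact_mod_cast hmax w hw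
    rw [hdecomp w hw]
    constructor
    · have : ((N w \ Q).card : ℤ) ≤ ((∑ x ∈ N w \ Q, f x : ℕ) : ℤ) := by exact_mod_cast hmlo
      have hk : (f w : ℤ) ≤ k := by exact_mod_cast hfwk
      linarith [hmw]
    · have h1 : ((∑ x ∈ N w \ Q, f x : ℕ) : ℤ) ≤ (k : ℤ) * (N w \ Q).card := by
        exact_mod_cast hmhi
      have h2 : (k : ℤ) * ((N w \ Q).card : ℤ) ≤ k * ((deg G v : ℤ) - q + 1) := by
        apply mul_le_mul_of_nonneg_left _ (by positivity)
        rw [hmw]; linarith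
      have hfw1' : (1 : ℤ) ≤ f w := by exact_mod_cast hfw1
      linarith
  -- injectivity on Q
  have hinjQ : Set.InjOn (fun w => (nbrSum G f w : ℤ)) Q := by
    intro a ha b hb hab
    dsimp only at hab
    by_contra hne
    exact hf.2 a b (hclique a ha b hb hne) (by exact_mod_cast hab)
  set a : ℤ := (S : ℤ) - k + (deg G u : ℤ) - q + 1 with ha
  set b : ℤ := (S : ℤ) - 1 + k * ((deg G v : ℤ) - q + 1) with hb
  have hmaps : ∀ w ∈ Q, (nbrSum G f w : ℤ) ∈ Finset.Icc a b := by
    intro w hw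
    rw [Finset.mem_Icc]
    exact (hbound w hw)
  have hcard : q ≤ (Finset.Icc a b).card :=
    Finset.card_le_card_of_injOn _ hmaps hinjQ
  rw [Int.card_Icc] at hcard
  have hcard' : (q : ℤ) ≤ b + 1 - a := by
    by_cases hpos : 0 ≤ b + 1 - a
    · rwa [← Int.toNat_of_nonneg hpos, Int.ofNat_le]
    · push_neg at hpos
      rw [Int.toNat_of_nonpos hpos.le] at hcard
      omega
  have hring : (k : ℤ) * ((deg G v : ℤ) - q + 2) = k * ((deg G v : ℤ) - q + 1) + k := by ring
  rw [hring]
  simp only [ha, hb] at hcard'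
  linarith

/-- For a nonempty clique `Q` with minimum-degree vertex `u` and maximum-degree vertex `v`,
`η(G) ≥ ⌈(d(u) + 1) / (d(v) - |Q| + 2)⌉`. -/
theorem eta_clique_lower_bound {V : Type*} [Fintype V] (G : SimpleGraph V)
    (Q : Finset V) (hQ : Q.Nonempty)
    (hclique : ∀ u ∈ Q, ∀ v ∈ Q, u ≠ v → G.Adj u v)
    (u v : V) (hu : u ∈ Q) (hv : v ∈ Q)
    (hmin : ∀ w ∈ Q, deg G u ≤ deg G w) (hmax : ∀ w ∈ Q, deg G w ≤ deg G v) :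
    ⌈((deg G u : ℚ) + 1) / ((deg G v : ℚ) - (Q.card : ℚ) + 2)⌉ ≤ (eta G : ℤ) := by
  classical
  have hne : {k | ∃ f : V → ℕ, IsAdditiveColoring G k f}.Nonempty :=
    exists_additive_coloring G
  have hmem : eta G ∈ {k | ∃ f : V → ℕ, IsAdditiveColoring G k f} := Nat.sInf_mem hne
  obtain ⟨f, hf⟩ := hmem
  have key := additive_key G Q hQ hclique u v hu hv hmin hmax (eta G) f hf
  -- denominator positivity: q - 1 ≤ deg v
  have hdenom : (Q.card : ℤ) - 1 ≤ (deg G v : ℤ) := by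
    have hsub : Q.erase v ⊆ Finset.univ.filter (fun x => G.Adj v x) := by
      intro x hx
      rw [Finset.mem_erase] at hx
      simp only [Finset.mem_filter, Finset.mem_univ, true_and]
      exact (hclique x hx.2 v hv hx.1).symm
    have h1 : (Q.erase v).card ≤ deg G v := by
      calc (Q.erase v).card ≤ (Finset.univ.filter (fun x => G.Adj v x)).card :=
            Finset.card_le_card hsub
        _ = deg G v := rfl
    rw [Finset.card_erase_of_mem hv] at h1
    have hq1 : 1 ≤ Q.card := Finset.card_pos.mpr hQ
    omega
  have hDpos : (0 : ℚ) < (deg G v : ℚ) - (Q.card : ℚ) + 2 := by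
    have : ((Q.card : ℚ)) - 1 ≤ (deg G v : ℚ) := by exact_mod_cast hdenom
    linarith
  rw [Int.ceil_le, div_le_iff₀ hDpos]
  have keyQ : ((deg G u : ℚ)) + 1 ≤ (eta G : ℚ) * ((deg G v : ℚ) - (Q.card : ℚ) + 2) := by
    exact_mod_cast key
  push_cast
  linarith
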